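/- Let {ᾱ_k}_{k≥0} ⊂ [0,1) satisfy Σ_{k=0}^∞ ᾱ_k = ∞ and Σ_{k=0}^∞ ᾱ_k² < ∞, and define β_k = 1 / ∏_{j=0}^{k−1} (1 − ᾱ_j) (with β_0 = 1). Then limsup_{k→∞} (Σ_{j=0}^k ᾱ_j² β_{j+1}) / β_{k+1} = 0, i.e. the weighted averages (Σ_{j=0}^k ᾱ_j² β_{j+1}) / β_{k+1} converge to 0 as k → ∞. -/

import Mathlib

open Filter Finset

/-- The weighted-average lemma used in the proof of the convex nonaccumulation
theorem: if `ᾱ_k ∈ [0,1)` with `Σ ᾱ_k = ∞` and `Σ ᾱ_k² < ∞`, and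
`β_k = 1 / ∏_{j<k} (1 - ᾱ_j)`, then `(Σ_{j=0}^k ᾱ_j² β_{j+1}) / β_{k+1} → 0`. -/
theorem weighted_average_stepsize_tendsto_zero
    (α : ℕ → ℝ) (hα : ∀ k, α k ∈ Set.Ico (0 : ℝ) 1)
    (hdiv : ¬ Summable α)
    (hsq : Summable (fun k => (α k) ^ 2))
    (β : ℕ → ℝ)
    (hβ : ∀ k, β k = (∏ j ∈ Finset.range k, (1 - α j))⁻¹) :
    Filter.Tendsto
      (fun k => (∑ j ∈ Finset.range (k + 1), (α j) ^ 2 * β (j + 1)) / β (k + 1))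
      Filter.atTop (nhds 0) := by
  have hα0 : ∀ k, 0 ≤ α k := fun k => (hα k).1
  have hα1 : ∀ k, α k < 1 := fun k => (hα k).2
  have hPpos : ∀ k, 0 < ∏ j ∈ range k, (1 - α j) :=
    fun k => Finset.prod_pos fun j _ => by linarith [hα1 j]
  have hβpos : ∀ k, 0 < β k := fun k => by rw [hβ k]; exact inv_pos.mpr (hPpos k)
  -- step identity
  have hstep : ∀ j, α j * β (j + 1) = β (j + 1) - β j := by
    intro j
    have h1 : β (j + 1) * (1 - α j) = β j := by
      rw [hβ, hβ, Finset.prod_range_succ]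
      have := hPpos j
      have h2 : (1 : ℝ) - α j ≠ 0 := by linarith [hα1 j]
      field_simp
    nlinarith [h1]
  have hmono : Monotone β := by
    apply monotone_nat_of_le_succ
    intro n
    have := hstep n
    nlinarith [hβpos (n + 1), hα0 n]
  -- β tends to infinity
  have hsum : Tendsto (fun k => ∑ j ∈ range k, α j) atTop atTop :=
    (not_summable_iff_tendsto_nat_atTop_of_nonneg hα0).mp hdiv
  have hPle : ∀ k, ∏ j ∈ range k, (1 - α j) ≤ Real.exp (-(∑ j ∈ range k, α j)) := by
    intro k
    calc ∏ j ∈ range k, (1 - α j) ≤ ∏ j ∈ range k, Real.exp (-(α j)) :=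
          Finset.prod_le_prod (fun j _ => by linarith [hα1 j])
            (fun j _ => by linarith [Real.add_one_le_exp (-(α j))])
      _ = Real.exp (∑ j ∈ range k, -(α j)) := (Real.exp_sum _ _).symm
      _ = Real.exp (-(∑ j ∈ range k, α j)) := by rw [Finset.sum_neg_distrib]
  have hP0 : Tendsto (fun k => ∏ j ∈ range k, (1 - α j)) atTop (nhds 0) := by
    have hexp : Tendsto (fun k => Real.exp (-(∑ j ∈ range k, α j))) atTop (nhds 0) :=
      Real.tendsto_exp_atBot.comp (tendsto_neg_atBot_iff.mpr hsum)
    exact squeeze_zero (fun k => (hPpos k).le) hPle hexp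
  have hβtop : Tendsto β atTop atTop := by
    have : Tendsto (fun k => ∏ j ∈ range k, (1 - α j)) atTop (nhdsWithin 0 (Set.Ioi 0)) :=
      tendsto_nhdsWithin_of_tendsto_nhds_of_eventually_within _ hP0
        (Eventually.of_forall fun k => hPpos k)
    have hinv := this.inv_tendsto_nhdsGT_zero
    refine hinv.congr fun k => ?_
    simp [hβ k]
  -- α tends to 0
  have hαlim : Tendsto α atTop (nhds 0) := by
    have h2 := hsq.tendsto_atTop_zero
    have h3 : Tendsto (fun k => Real.sqrt ((α k) ^ 2)) atTop (nhds 0) := by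
      have := (Real.continuous_sqrt.tendsto 0).comp h2
      simpa [Function.comp_def] using this
    refine h3.congr fun k => ?_
    rw [Real.sqrt_sq (hα0 k)]
  -- main argument
  rw [NormedAddCommGroup.tendsto_nhds_zero]
  intro ε hε
  have hε3 : 0 < ε / 3 := by linarith
  obtain ⟨N, hN⟩ := (eventually_atTop.mp (hαlim.eventually (gt_mem_nhds hε3)))
  set C := ∑ j ∈ range N, (α j) ^ 2 * β (j + 1) with hC
  have hC0 : 0 ≤ C :=
    Finset.sum_nonneg fun j _ => mul_nonneg (sq_nonneg _) (hβpos (j + 1)).le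
  have hβev : ∀ᶠ k in atTop, C / β (k + 1) < ε / 3 := by
    have h1 : Tendsto (fun k => β (k + 1)) atTop atTop :=
      hβtop.comp (tendsto_add_atTop_nat 1)
    have h2 : Tendsto (fun k => C / β (k + 1)) atTop (nhds 0) :=
      Tendsto.div_atTop tendsto_const_nhds h1
    exact h2.eventually (gt_mem_nhds hε3)
  filter_upwards [hβev, eventually_ge_atTop N] with k hk1 hk2
  have hβk := hβpos (k + 1)
  have hsplit : ∑ j ∈ range (k + 1), (α j) ^ 2 * β (j + 1)
      = C + ∑ j ∈ Finset.Ico N (k + 1), (α j) ^ 2 * β (j + 1) := by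
    rw [hC, Finset.range_eq_Ico, Finset.range_eq_Ico]
    exact (Finset.sum_Ico_consecutive (fun j => α j ^ 2 * β (j + 1)) (Nat.zero_le N) (by omega : N ≤ k + 1)).symm
  have htail : ∑ j ∈ Finset.Ico N (k + 1), (α j) ^ 2 * β (j + 1)
      ≤ ε / 3 * (β (k + 1) - β N) := by
    calc ∑ j ∈ Finset.Ico N (k + 1), (α j) ^ 2 * β (j + 1)
        ≤ ∑ j ∈ Finset.Ico N (k + 1), ε / 3 * (α j * β (j + 1)) := by
          refine Finset.sum_le_sum fun j hj => ?_
          have hjN : N ≤ j := (Finset.mem_Ico.mp hj).1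
          have hαj := hN j hjN
          have h0 : 0 ≤ α j * β (j + 1) := mul_nonneg (hα0 j) (hβpos (j + 1)).le
          nlinarith [hα0 j, hβpos (j + 1)]
      _ = ε / 3 * ∑ j ∈ Finset.Ico N (k + 1), (β (j + 1) - β j) := by
          rw [Finset.mul_sum]
          exact Finset.sum_congr rfl fun j _ => by rw [hstep j]
      _ = ε / 3 * (β (k + 1) - β N) := by
          rw [Finset.sum_Ico_eq_sub _ (by omega : N ≤ k + 1),
            Finset.sum_range_sub, Finset.sum_range_sub]
          ring
  have hf0 : 0 ≤ (∑ j ∈ range (k + 1), (α j) ^ 2 * β (j + 1)) / β (k + 1) :=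
    div_nonneg (Finset.sum_nonneg fun j _ => mul_nonneg (sq_nonneg _) (hβpos (j + 1)).le)
      hβk.le
  rw [Real.norm_of_nonneg hf0]
  have hβN : 0 < β N := hβpos N
  have hbound : (∑ j ∈ range (k + 1), (α j) ^ 2 * β (j + 1)) / β (k + 1)
      ≤ C / β (k + 1) + ε / 3 := by
    rw [hsplit]
    have : C + ∑ j ∈ Finset.Ico N (k + 1), (α j) ^ 2 * β (j + 1)
        ≤ C + ε / 3 * β (k + 1) := by nlinarith [htail]
    calc (C + ∑ j ∈ Finset.Ico N (k + 1), (α j) ^ 2 * β (j + 1)) / β (k + 1)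
        ≤ (C + ε / 3 * β (k + 1)) / β (k + 1) := by gcongr
      _ = C / β (k + 1) + ε / 3 := by
          rw [add_div, mul_div_assoc, div_self hβk.ne', mul_one]
  linarith [hk1]
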